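/- There exist a nonempty finite alphabet A and a finite set L of patterns over ℤ × ℤ such that the subshift of finite type X = {x : ℤ × ℤ → A | for all g ∈ ℤ × ℤ, g·x disagrees with every pattern in L} is nonempty and Stab(x) = {0} for every x ∈ X (a strongly aperiodic SFT on ℤ²). -/

import Mathlib

/-- The shift action of an additive group `Γ` on configurations: `(g • x) h = x (-g + h)`. -/
def ShiftA {Γ A : Type*} [AddGroup Γ] (g : Γ) (x : Γ → A) : Γ → A :=
  fun h => x (-g + h)

/-- The stabilizer of a configuration under the shift action. -/
def StabA {Γ A : Type*} [AddGroup Γ] (x : Γ → A) : Set Γ :=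
  {g | ShiftA g x = x}

/-- The SFT on `Γ` determined by a set `L` of patterns over `Γ` (a pattern being a finite
domain `D ⊆ Γ` together with a word on it): the configurations `x : Γ → A` all of whose
shifts `g • x` disagree with every pattern of `L`. -/
def SFTA {Γ A : Type*} [AddGroup Γ] (L : Set (Finset Γ × (Γ → A))) : Set (Γ → A) :=
  {x | ∀ g : Γ, ∀ w ∈ L, ∃ k ∈ w.1, ShiftA g x k ≠ w.2 k}

/-- Tile symbols: (mode, top digit, left carry code, right carry code). -/
abbrev KSym : Type := Bool × Fin 3 × Fin 3 × Fin 3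

/-- multiplier of a mode -/
def qv (b : Bool) : ℚ := if b then 2 else 1/3

/-- left carry value -/
def clv (s : KSym) : ℚ := if s.1 then (s.2.2.1 : ℚ) - 1 else (s.2.2.1 : ℚ)/3

/-- right carry value -/
def crv (s : KSym) : ℚ := if s.1 then (s.2.2.2 : ℚ) - 1 else (s.2.2.2 : ℚ)/3

/-- top digit -/
def dg (s : KSym) : ℚ := s.2.1

/-- bottom digit value -/
def bv (s : KSym) : ℚ := qv s.1 * dg s + clv s - crv s

def BadH : Set (KSym × KSym) := {p | ¬ (p.1.1 = p.2.1 ∧ p.1.2.2.2 = p.2.2.2.1)}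
def BadV : Set (KSym × KSym) := {p | dg p.2 ≠ bv p.1}
def Bad3 : Set (KSym × KSym × KSym) := {p | dg p.1 = 0 ∧ dg p.2.1 = 0 ∧ dg p.2.2 = 0}

noncomputable def eS : KSym ≃ Fin 54 := Fintype.equivFinOfCardEq (by decide)

noncomputable def patH (p : KSym × KSym) : Finset (ℤ × ℤ) × ((ℤ × ℤ) → Fin 54) :=
  (({((0:ℤ),(0:ℤ)), (1,0)} : Finset (ℤ × ℤ)), fun u => if u = (0,0) then eS p.1 else eS p.2)

noncomputable def patV (p : KSym × KSym) : Finset (ℤ × ℤ) × ((ℤ × ℤ) → Fin 54) :=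
  (({((0:ℤ),(0:ℤ)), (0,1)} : Finset (ℤ × ℤ)), fun u => if u = (0,1) then eS p.1 else eS p.2)

noncomputable def pat3 (p : KSym × KSym × KSym) : Finset (ℤ × ℤ) × ((ℤ × ℤ) → Fin 54) :=
  (({((0:ℤ),(0:ℤ)), (1,0), (2,0)} : Finset (ℤ × ℤ)),
    fun u => if u = (0,0) then eS p.1 else if u = (1,0) then eS p.2.1 else eS p.2.2)

noncomputable def LK : Set (Finset (ℤ × ℤ) × ((ℤ × ℤ) → Fin 54)) :=
  patH '' BadH ∪ patV '' BadV ∪ pat3 '' Bad3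

theorem LK_finite : LK.Finite := by
  refine (((Set.toFinite BadH).image patH).union ((Set.toFinite BadV).image patV)).union
    ((Set.toFinite Bad3).image pat3)

def fK (t : ℚ) : ℚ := if t < 1 then 2*t else t/3
def gK (t : ℚ) : ℚ := if 2/3 ≤ t then t/2 else 3*t

def uK : ℕ → ℚ
  | 0 => 1
  | (n+1) => fK (uK n)

def vK : ℕ → ℚ
  | 0 => 1
  | (n+1) => gK (vK n)

def yK (j : ℤ) : ℚ := if 0 ≤ j then vK j.toNat else uK (-j).toNat

lemma fK_rng {t : ℚ} (h1 : 1/3 ≤ t) (h2 : t < 2) : 1/3 ≤ fK t ∧ fK t < 2 := by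
  unfold fK; split <;> constructor <;> linarith

lemma gK_rng {t : ℚ} (h1 : 1/3 ≤ t) (h2 : t < 2) : 1/3 ≤ gK t ∧ gK t < 2 := by
  unfold gK; split <;> constructor <;> linarith

lemma fgK {t : ℚ} (h1 : 1/3 ≤ t) (h2 : t < 2) : fK (gK t) = t := by
  unfold gK
  split
  · unfold fK; rw [if_pos (by linarith)]; ring
  · unfold fK; rw [if_neg (by push_neg; linarith)]; ring

lemma uK_rng (n : ℕ) : 1/3 ≤ uK n ∧ uK n < 2 := by
  induction n with
  | zero => norm_num [uK]
  | succ n ih => exact fK_rng ih.1 ih.2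

lemma vK_rng (n : ℕ) : 1/3 ≤ vK n ∧ vK n < 2 := by
  induction n with
  | zero => norm_num [vK]
  | succ n ih => exact gK_rng ih.1 ih.2

lemma yK_rng (j : ℤ) : 1/3 ≤ yK j ∧ yK j < 2 := by
  unfold yK; split
  · exact vK_rng _
  · exact uK_rng _

lemma yK_step (j : ℤ) : yK j = fK (yK (j+1)) := by
  unfold yK
  rcases lt_trichotomy j 0 with h | h | h
  · rw [if_neg (by omega)]
    by_cases h1 : j + 1 = 0
    · rw [if_pos (by omega)]
      have : (-j).toNat = 1 := by omega
      rw [this]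
      have : (j+1).toNat = 0 := by omega
      rw [this]
      rfl
    · rw [if_neg (by omega)]
      have : (-j).toNat = (-(j+1)).toNat + 1 := by omega
      rw [this]
      rfl
  · subst h
    norm_num
    show vK 0 = fK (vK (1:ℤ).toNat)
    have : (1:ℤ).toNat = 1 := rfl
    rw [this]
    show vK 0 = fK (gK (vK 0))
    rw [fgK (vK_rng 0).1 (vK_rng 0).2]
  · rw [if_pos (by omega), if_pos (by omega)]
    have : (j+1).toNat = j.toNat + 1 := by omega
    rw [this]
    show vK j.toNat = fK (gK (vK j.toNat))
    rw [fgK (vK_rng _).1 (vK_rng _).2]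

/-- mode of row j : `true` iff multiplier is 2 -/
def moK (j : ℤ) : Bool := decide (yK j < 1)

def qvK (b : Bool) : ℚ := if b then 2 else 1/3

lemma yK_mul (j : ℤ) : yK j = qvK (moK (j+1)) * yK (j+1) := by
  rw [yK_step j]
  unfold fK qvK moK
  by_cases h : yK (j+1) < 1
  · simp [h]
  · simp [h]; ring

-- floor helper lemmas
lemma floor_add_le (z y : ℚ) : ⌊z⌋ + ⌊y⌋ ≤ ⌊z + y⌋ := by
  have := Int.floor_le z
  have := Int.floor_le y
  have : ((⌊z⌋ + ⌊y⌋ : ℤ) : ℚ) ≤ z + y := by push_cast; linarith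
  exact Int.le_floor.mpr this

lemma floor_two_mul_le (z : ℚ) : ⌊2*z⌋ ≤ 2*⌊z⌋ + 1 := by
  have h : 2*z < ((2*⌊z⌋ + 2 : ℤ) : ℚ) := by
    have := Int.lt_floor_add_one z
    push_cast; linarith
  have := Int.floor_lt.mpr h
  omega

lemma le_floor_two_mul (z : ℚ) : 2*⌊z⌋ ≤ ⌊2*z⌋ := by
  have h : ((2*⌊z⌋ : ℤ) : ℚ) ≤ 2*z := by
    have := Int.floor_le z
    push_cast; linarith
  exact Int.le_floor.mpr h

lemma floor_third_ge (z : ℚ) : ⌊z⌋ - 2 ≤ 3*⌊z/3⌋ := by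
  have h : z/3 - 1 < (⌊z/3⌋ : ℚ) := Int.sub_one_lt_floor _
  have h2 : (⌊z⌋ : ℚ) ≤ z := Int.floor_le z
  have h3 : ((⌊z⌋ - 3 : ℤ) : ℚ) < ((3*⌊z/3⌋ : ℤ) : ℚ) := by push_cast; linarith
  have := Int.cast_lt.mp h3
  omega

lemma floor_third_le (z : ℚ) : 3*⌊z/3⌋ ≤ ⌊z⌋ := by
  have h : ((3*⌊z/3⌋ : ℤ) : ℚ) ≤ z := by
    have := Int.floor_le (z/3)
    push_cast; linarith
  have := Int.le_floor.mpr h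
  omega

/-- top digit of the explicit tiling -/
def DK (i j : ℤ) : ℤ := ⌊(i:ℚ) * yK j⌋ - ⌊((i:ℚ)-1) * yK j⌋

lemma DK_nonneg (i j : ℤ) : 0 ≤ DK i j := by
  unfold DK
  have h := (yK_rng j).1
  have : ((i:ℚ)-1) * yK j ≤ (i:ℚ) * yK j := by nlinarith
  have := Int.floor_le_floor this
  omega

lemma DK_le_two (i j : ℤ) : DK i j ≤ 2 := by
  unfold DK
  have h := (yK_rng j).2
  have h1 : (i:ℚ) * yK j = ((i:ℚ)-1) * yK j + yK j := by ring
  have h2 : ⌊(i:ℚ) * yK j⌋ ≤ ⌊((i:ℚ)-1) * yK j + 2⌋ := by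
    apply Int.floor_le_floor; linarith [h1]
  rw [show ((i:ℚ)-1) * yK j + 2 = (((i:ℚ)-1) * yK j) + (2:ℤ) by push_cast; ring,
    Int.floor_add_intCast] at h2
  omega

/-- integer carry code of the tile at (i,j): in {0,1,2} -/
def ecZ (i j : ℤ) : ℤ :=
  if moK j then 2 * ⌊((i:ℚ)-1) * yK j⌋ - ⌊((i:ℚ)-1) * yK (j-1)⌋ + 1
  else ⌊((i:ℚ)-1) * yK j⌋ - 3 * ⌊((i:ℚ)-1) * yK (j-1)⌋

lemma yK_pred (j : ℤ) : yK (j-1) = qvK (moK j) * yK j := by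
  have := yK_mul (j-1)
  rwa [show j - 1 + 1 = j by ring] at this

lemma ecZ_rng (i j : ℤ) : 0 ≤ ecZ i j ∧ ecZ i j < 3 := by
  unfold ecZ
  set z : ℚ := ((i:ℚ)-1) * yK j with hz
  have hpred := yK_pred j
  by_cases h : moK j
  · rw [if_pos h]
    have h2 : ((i:ℚ)-1) * yK (j-1) = 2 * z := by
      rw [hpred, h]; unfold qvK; simp; ring
    rw [h2]
    constructor
    · have := floor_two_mul_le z; omega
    · have := le_floor_two_mul z; omega
  · rw [if_neg h]
    have h2 : ((i:ℚ)-1) * yK (j-1) = z / 3 := by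
      rw [hpred]; simp only [h]; unfold qvK; simp; ring
    rw [h2]
    constructor
    · have := floor_third_le z; omega
    · have := floor_third_ge z; omega

def finZ3 (z : ℤ) (h0 : 0 ≤ z) (h3 : z < 3) : Fin 3 := ⟨z.toNat, by omega⟩

lemma finZ3_cast (z : ℤ) (h0 : 0 ≤ z) (h3 : z < 3) : ((finZ3 z h0 h3 : Fin 3) : ℚ) = (z : ℚ) := by
  unfold finZ3
  have : (z.toNat : ℤ) = z := by omega
  push_cast
  exact_mod_cast congrArg (fun t : ℤ => (t:ℚ)) this

/-- the explicit tiling -/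
def tileK (u : ℤ × ℤ) : KSym :=
  (moK u.2,
   finZ3 (DK u.1 u.2) (DK_nonneg _ _) (by have := DK_le_two u.1 u.2; omega),
   finZ3 (ecZ u.1 u.2) (ecZ_rng _ _).1 (ecZ_rng _ _).2,
   finZ3 (ecZ (u.1+1) u.2) (ecZ_rng _ _).1 (ecZ_rng _ _).2)

lemma dg_tileK (i j : ℤ) : dg (tileK (i,j)) = (DK i j : ℚ) :=
  finZ3_cast (DK i j) (DK_nonneg i j) (by have := DK_le_two i j; omega)

lemma clv_tileK (i j : ℤ) :
    clv (tileK (i,j)) = qvK (moK j) * ⌊((i:ℚ)-1) * yK j⌋ - ⌊((i:ℚ)-1) * yK (j-1)⌋ := by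
  unfold clv tileK
  simp only
  rw [finZ3_cast]
  unfold ecZ qvK
  by_cases h : moK j
  · rw [if_pos h, if_pos h, if_pos h]; push_cast; ring
  · rw [if_neg h, if_neg h, if_neg h]; push_cast; ring

lemma crv_tileK (i j : ℤ) :
    crv (tileK (i,j)) = qvK (moK j) * ⌊(i:ℚ) * yK j⌋ - ⌊(i:ℚ) * yK (j-1)⌋ := by
  unfold crv tileK
  simp only
  rw [finZ3_cast]
  unfold ecZ qvK
  by_cases h : moK j
  · rw [if_pos h, if_pos h, if_pos h]; push_cast; ring
  · rw [if_neg h, if_neg h, if_neg h]; push_cast; ring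

lemma qv_eq_qvK (b : Bool) : qv b = qvK b := rfl

/-- the vertical constraint for the explicit tiling -/
lemma tileK_V (i j : ℤ) : dg (tileK (i,j)) = bv (tileK (i,j+1)) := by
  rw [dg_tileK]
  unfold bv
  rw [dg_tileK, clv_tileK, crv_tileK]
  show (DK i j : ℚ) = qv (tileK (i,j+1)).1 * (DK i (j+1) : ℚ) + _ - _
  have hm : (tileK (i,j+1)).1 = moK (j+1) := rfl
  rw [hm, qv_eq_qvK]
  rw [show j + 1 - 1 = j by ring]
  unfold DK
  have hy : yK j = qvK (moK (j+1)) * yK (j+1) := yK_mul j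
  push_cast
  rw [hy]
  ring

/-- the horizontal constraint for the explicit tiling -/
lemma tileK_H (i j : ℤ) :
    (tileK (i,j)).1 = (tileK (i+1,j)).1 ∧ (tileK (i,j)).2.2.2 = (tileK (i+1,j)).2.2.1 := by
  constructor
  · rfl
  · rfl

/-- no three consecutive zero digits -/
lemma tileK_3 (i j : ℤ) : ¬ (DK i j = 0 ∧ DK (i+1) j = 0 ∧ DK (i+2) j = 0) := by
  rintro ⟨h0, h1, h2⟩
  have hy := (yK_rng j).1
  unfold DK at h0 h1 h2
  have e1 : ((i:ℚ)+1) - 1 = (i:ℚ) := by ring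
  have e2 : ((i:ℚ)+2) - 1 = (i:ℚ)+1 := by ring
  push_cast at h1 h2
  rw [e1] at h1
  rw [e2] at h2
  -- ⌊(i+2) y⌋ = ⌊(i-1) y⌋ but (i+2)y ≥ (i-1)y + 1
  have hle : ((i:ℚ)-1) * yK j + 1 ≤ ((i:ℚ)+2) * yK j := by nlinarith
  have h4 : ⌊((i:ℚ)-1) * yK j + (1:ℤ)⌋ ≤ ⌊((i:ℚ)+2) * yK j⌋ := by
    apply Int.floor_le_floor; push_cast; linarith
  rw [Int.floor_add_intCast] at h4
  omega

/-- the explicit configuration -/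
noncomputable def xKc : (ℤ × ℤ) → Fin 54 := fun u => eS (tileK u)

lemma na00 (g : ℤ × ℤ) : -g + ((0:ℤ),(0:ℤ)) = (-g.1, -g.2) := by
  simp [Prod.ext_iff]
lemma na10 (g : ℤ × ℤ) : -g + ((1:ℤ),(0:ℤ)) = (-g.1 + 1, -g.2) := by
  simp [Prod.ext_iff]
lemma na20 (g : ℤ × ℤ) : -g + ((2:ℤ),(0:ℤ)) = (-g.1 + 2, -g.2) := by
  simp [Prod.ext_iff]
lemma na01 (g : ℤ × ℤ) : -g + ((0:ℤ),(1:ℤ)) = (-g.1, -g.2 + 1) := by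
  simp [Prod.ext_iff]

lemma xKc_mem : xKc ∈ SFTA LK := by
  intro g w hw
  rcases hw with (hw | hw) | hw
  · rcases hw with ⟨p, hp, rfl⟩
    by_contra hc
    push_neg at hc
    have h00 := hc ((0:ℤ),(0:ℤ)) (Finset.mem_insert_self _ _)
    have h10 := hc ((1:ℤ),(0:ℤ)) (Finset.mem_insert_of_mem (Finset.mem_singleton_self _))
    simp only [ShiftA, xKc, patH, na00, na10] at h00 h10
    rw [if_pos trivial] at h00
    rw [if_neg (by decide)] at h10
    have e1 : tileK (-g.1, -g.2) = p.1 := eS.injective h00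
    have e2 : tileK (-g.1 + 1, -g.2) = p.2 := eS.injective h10
    exact hp ⟨e1 ▸ e2 ▸ (tileK_H (-g.1) (-g.2)).1, e1 ▸ e2 ▸ (tileK_H (-g.1) (-g.2)).2⟩
  · rcases hw with ⟨p, hp, rfl⟩
    by_contra hc
    push_neg at hc
    have h00 := hc ((0:ℤ),(0:ℤ)) (Finset.mem_insert_self _ _)
    have h01 := hc ((0:ℤ),(1:ℤ)) (Finset.mem_insert_of_mem (Finset.mem_singleton_self _))
    simp only [ShiftA, xKc, patV, na00, na01] at h00 h01
    rw [if_pos trivial] at h01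
    have e2 : tileK (-g.1, -g.2) = p.2 := eS.injective h00
    have e1 : tileK (-g.1, -g.2 + 1) = p.1 := eS.injective h01
    apply hp
    show dg p.2 = bv p.1
    rw [← e1, ← e2]
    exact tileK_V (-g.1) (-g.2)
  · rcases hw with ⟨p, hp, rfl⟩
    by_contra hc
    push_neg at hc
    have h00 := hc ((0:ℤ),(0:ℤ)) (Finset.mem_insert_self _ _)
    have h10 := hc ((1:ℤ),(0:ℤ))
      (Finset.mem_insert_of_mem (Finset.mem_insert_self _ _))
    have h20 := hc ((2:ℤ),(0:ℤ))
      (Finset.mem_insert_of_mem (Finset.mem_insert_of_mem (Finset.mem_singleton_self _)))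
    simp only [ShiftA, xKc, pat3, na00, na10, na20] at h00 h10 h20
    rw [if_pos trivial] at h00
    rw [if_neg (by decide), if_pos trivial] at h10
    rw [if_neg (by decide), if_neg (by decide)] at h20
    have e1 : tileK (-g.1, -g.2) = p.1 := eS.injective h00
    have e2 : tileK (-g.1 + 1, -g.2) = p.2.1 := eS.injective h10
    have e3 : tileK (-g.1 + 2, -g.2) = p.2.2 := eS.injective h20
    obtain ⟨d1, d2, d3⟩ := hp
    rw [← e1] at d1; rw [← e2] at d2; rw [← e3] at d3
    rw [dg_tileK] at d1 d2 d3
    apply tileK_3 (-g.1) (-g.2)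
    exact ⟨by exact_mod_cast d1, by exact_mod_cast d2, by exact_mod_cast d3⟩

section Aperiodic

variable (z : ℤ → ℤ → KSym)

/-- integer digit -/
def dZ (i j : ℤ) : ℤ := ((z i j).2.1 : ℤ)

/-- mode of row j -/
def Mo (j : ℤ) : Bool := (z 0 j).1

/-- left carry value -/
def Cv (i j : ℤ) : ℚ := clv (z i j)

/-- window sum of digits -/
def SZ (m : ℤ) (l : ℕ) (j : ℤ) : ℤ := ∑ k ∈ Finset.range l, dZ z (m + (k:ℤ)) j

lemma dZ_cast (i j : ℤ) : ((dZ z i j : ℤ) : ℚ) = dg (z i j) := by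
  unfold dZ dg; push_cast; rfl

lemma dZ_nonneg (i j : ℤ) : 0 ≤ dZ z i j := by unfold dZ; positivity

lemma dZ_le_two (i j : ℤ) : dZ z i j ≤ 2 := by
  unfold dZ
  have := (z i j).2.1.isLt
  omega

lemma Cv_abs (i j : ℤ) : -1 ≤ Cv z i j ∧ Cv z i j ≤ 1 := by
  unfold Cv clv
  have h0 : (0:ℚ) ≤ ((z i j).2.2.1 : ℚ) := by positivity
  have h2 : ((z i j).2.2.1 : ℚ) ≤ 2 := by
    have := (z i j).2.2.1.isLt
    have : ((z i j).2.2.1 : ℕ) ≤ 2 := by omega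
    exact_mod_cast this
  split <;> constructor <;> linarith

variable (hH : ∀ i j : ℤ, (z i j).1 = (z (i+1) j).1 ∧ (z i j).2.2.2 = (z (i+1) j).2.2.1)
variable (hV : ∀ i j : ℤ, dg (z i j) = bv (z i (j+1)))

include hH in
lemma mode_const : ∀ i j : ℤ, (z i j).1 = Mo z j := by
  intro i j
  unfold Mo
  induction i using Int.induction_on with
  | zero => rfl
  | succ i ih => rw [← (hH i j).1]; exact ih
  | pred i ih => rw [(hH (-i-1) j).1]; rw [show -(i:ℤ)-1+1 = -i by ring]; exact ih

lemma qvK_pos (b : Bool) : 0 < qvK b := by unfold qvK; split <;> norm_num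

lemma qvK_le_two (b : Bool) : qvK b ≤ 2 := by unfold qvK; split <;> norm_num

include hH hV in
lemma rowrel : ∀ i j : ℤ,
    ((dZ z i j : ℤ) : ℚ) = qvK (Mo z (j+1)) * dZ z i (j+1) + Cv z i (j+1) - Cv z (i+1) (j+1) := by
  intro i j
  rw [dZ_cast, dZ_cast]
  have h := hV i j
  rw [h]
  unfold bv
  have hm := mode_const z hH i (j+1)
  have hq : qv (z i (j+1)).1 = qvK (Mo z (j+1)) := by rw [hm]; rfl
  rw [hq]
  have hcr : crv (z i (j+1)) = clv (z (i+1) (j+1)) := by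
    unfold crv clv
    rw [(hH i (j+1)).2, (hH i (j+1)).1]
  rw [hcr]
  rfl

include hH hV in
lemma Srel : ∀ (m : ℤ) (l : ℕ) (j : ℤ),
    ((SZ z m l j : ℤ) : ℚ) =
      qvK (Mo z (j+1)) * SZ z m l (j+1) + Cv z m (j+1) - Cv z (m + (l:ℤ)) (j+1) := by
  intro m l j
  induction l with
  | zero => simp [SZ]
  | succ l ih =>
    unfold SZ at *
    rw [Finset.sum_range_succ, Finset.sum_range_succ]
    have hr := rowrel z hH hV (m + (l:ℤ)) j
    push_cast at ih hr ⊢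
    rw [show m + ((l:ℤ)+1) = m + (l:ℤ) + 1 by ring]
    linarith [ih, hr]

lemma SZ_nonneg (m : ℤ) (l : ℕ) (j : ℤ) : 0 ≤ SZ z m l j :=
  Finset.sum_nonneg (fun k _ => dZ_nonneg z _ _)

lemma SZ_le (m : ℤ) (l : ℕ) (j : ℤ) : SZ z m l j ≤ 2 * l := by
  calc SZ z m l j ≤ ∑ k ∈ Finset.range l, 2 := Finset.sum_le_sum (fun k _ => dZ_le_two z _ _)
  _ = 2 * l := by simp [mul_comm]

variable (h3 : ∀ i j : ℤ, ¬(dg (z i j) = 0 ∧ dg (z (i+1) j) = 0 ∧ dg (z (i+2) j) = 0))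

include h3 in
lemma three_sum (i j : ℤ) : 1 ≤ dZ z i j + dZ z (i+1) j + dZ z (i+2) j := by
  have h := h3 i j
  have n0 := dZ_nonneg z i j
  have n1 := dZ_nonneg z (i+1) j
  have n2 := dZ_nonneg z (i+2) j
  by_contra hc
  push_neg at hc
  have e0 : dZ z i j = 0 := by omega
  have e1 : dZ z (i+1) j = 0 := by omega
  have e2 : dZ z (i+2) j = 0 := by omega
  apply h
  refine ⟨?_, ?_, ?_⟩ <;> rw [← dZ_cast] <;> [rw [e0]; rw [e1]; rw [e2]] <;> norm_num

include h3 in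
lemma SZ_lower (m : ℤ) (n : ℕ) (j : ℤ) : (n : ℤ) ≤ SZ z m (3*n) j := by
  induction n with
  | zero => simp [SZ]
  | succ n ih =>
    have hsplit : SZ z m (3*(n+1)) j = SZ z m (3*n) j
        + (dZ z (m + 3*(n:ℤ)) j + dZ z (m + 3*(n:ℤ) + 1) j + dZ z (m + 3*(n:ℤ) + 2) j) := by
      unfold SZ
      rw [show 3*(n+1) = (3*n) + 1 + 1 + 1 by ring]
      rw [Finset.sum_range_succ, Finset.sum_range_succ, Finset.sum_range_succ]
      push_cast
      ring_nf
    rw [hsplit]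
    have := three_sum z h3 (m + 3*(n:ℤ)) j
    push_cast
    omega

/-- product of multipliers going down from row 0 -/
def Qp : ℕ → ℚ
  | 0 => 1
  | (t+1) => qvK (Mo z (-(t:ℤ))) * Qp t

/-- error bound -/
def Bb : ℕ → ℚ
  | 0 => 0
  | (t+1) => 2 * Bb t + 2

lemma Qp_pos : ∀ t, 0 < Qp z t := by
  intro t
  induction t with
  | zero => norm_num [Qp]
  | succ t ih => unfold Qp; exact mul_pos (qvK_pos _) ih

lemma Bb_nonneg : ∀ t, 0 ≤ Bb t := by
  intro t
  induction t with
  | zero => norm_num [Bb]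
  | succ t ih => unfold Bb; linarith

lemma Qp_form : ∀ t, ∃ a b : ℕ, a + b = t ∧ Qp z t * 3^b = 2^a := by
  intro t
  induction t with
  | zero => exact ⟨0, 0, rfl, by norm_num [Qp]⟩
  | succ t ih =>
    obtain ⟨a, b, hab, hq⟩ := ih
    by_cases hm : Mo z (-(t:ℤ))
    · refine ⟨a+1, b, by omega, ?_⟩
      show qvK (Mo z (-(t:ℤ))) * Qp z t * 3^b = 2^(a+1)
      rw [hm]
      show 2 * Qp z t * 3^b = 2^(a+1)
      rw [pow_succ, mul_assoc, hq]; ring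
    · refine ⟨a, b+1, by omega, ?_⟩
      show qvK (Mo z (-(t:ℤ))) * Qp z t * 3^(b+1) = 2^a
      rw [Bool.not_eq_true] at hm
      rw [hm]
      show (1/3) * Qp z t * 3^(b+1) = 2^a
      rw [pow_succ, ← hq]; ring

include hH hV in
lemma S_iter (m : ℤ) (l : ℕ) :
    ∀ t : ℕ, |((SZ z m l (-(t:ℤ)) : ℤ) : ℚ) - Qp z t * SZ z m l 0| ≤ Bb t := by
  intro t
  induction t with
  | zero => norm_num [Qp, Bb]
  | succ t ih =>
    have hs := Srel z hH hV m l (-(t:ℤ)-1)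
    rw [show (-(t:ℤ)-1)+1 = -(t:ℤ) by ring] at hs
    have hidx : (-((t+1:ℕ):ℤ)) = -(t:ℤ)-1 := by push_cast; ring
    rw [hidx]
    have hq2 := qvK_le_two (Mo z (-(t:ℤ)))
    have hq0 := qvK_pos (Mo z (-(t:ℤ)))
    have hc1 := Cv_abs z m (-(t:ℤ))
    have hc2 := Cv_abs z (m + (l:ℤ)) (-(t:ℤ))
    have hB := Bb_nonneg t
    have key : ((SZ z m l (-(t:ℤ)-1) : ℤ) : ℚ) - Qp z (t+1) * SZ z m l 0
        = qvK (Mo z (-(t:ℤ))) * (((SZ z m l (-(t:ℤ)) : ℤ) : ℚ) - Qp z t * SZ z m l 0)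
          + (Cv z m (-(t:ℤ)) - Cv z (m + (l:ℤ)) (-(t:ℤ))) := by
      show _ = _
      rw [hs]
      show _ - (qvK (Mo z (-(t:ℤ))) * Qp z t) * _ = _
      ring
    rw [key]
    calc |qvK (Mo z (-(t:ℤ))) * (((SZ z m l (-(t:ℤ)) : ℤ) : ℚ) - Qp z t * SZ z m l 0)
          + (Cv z m (-(t:ℤ)) - Cv z (m + (l:ℤ)) (-(t:ℤ)))|
        ≤ |qvK (Mo z (-(t:ℤ))) * (((SZ z m l (-(t:ℤ)) : ℤ) : ℚ) - Qp z t * SZ z m l 0)|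
          + |Cv z m (-(t:ℤ)) - Cv z (m + (l:ℤ)) (-(t:ℤ))| := abs_add_le _ _
      _ ≤ 2 * Bb t + 2 := by
          rw [abs_mul]
          have h1 : |qvK (Mo z (-(t:ℤ)))| = qvK (Mo z (-(t:ℤ))) := abs_of_pos hq0
          rw [h1]
          have h2 : |Cv z m (-(t:ℤ)) - Cv z (m + (l:ℤ)) (-(t:ℤ))| ≤ 2 :=
            abs_le.mpr ⟨by linarith [hc1.1, hc1.2, hc2.1, hc2.2],
              by linarith [hc1.1, hc1.2, hc2.1, hc2.2]⟩
          have h3 : qvK (Mo z (-(t:ℤ))) * |((SZ z m l (-(t:ℤ)) : ℤ) : ℚ) - Qp z t * SZ z m l 0|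
              ≤ 2 * Bb t := by
            apply mul_le_mul hq2 ih (abs_nonneg _) (by norm_num)
          linarith
      _ = Bb (t+1) := rfl

lemma SZ_split (a : ℤ) (l n : ℕ) (j : ℤ) :
    SZ z a (l + n) j = SZ z a l j + SZ z (a + (l:ℤ)) n j := by
  induction n with
  | zero => simp [SZ]
  | succ n ih =>
    rw [show l + (n+1) = (l+n)+1 by ring]
    unfold SZ at *
    rw [Finset.sum_range_succ, Finset.sum_range_succ, ih]
    have e : a + ((l + n : ℕ) : ℤ) = a + (l:ℤ) + (n:ℤ) := by push_cast; ring
    rw [e]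
    ring

lemma SZ_shiftN (a : ℤ) (n l : ℕ) (j : ℤ) :
    |SZ z (a + (n:ℤ)) l j - SZ z a l j| ≤ 2*(n:ℤ) := by
  have h1 := SZ_split z a n l j
  have h2 := SZ_split z a l n j
  rw [show n + l = l + n by ring] at h1
  have e : SZ z (a + (n:ℤ)) l j - SZ z a l j = SZ z (a + (l:ℤ)) n j - SZ z a n j := by omega
  rw [e]
  have b1 := SZ_nonneg z (a + (l:ℤ)) n j
  have b2 := SZ_le z (a + (l:ℤ)) n j
  have b3 := SZ_nonneg z a n j
  have b4 := SZ_le z a n j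
  rw [abs_le]
  omega

lemma SZ_shiftZ (a q : ℤ) (l : ℕ) (j : ℤ) :
    |SZ z (a + q) l j - SZ z a l j| ≤ 2*|q| := by
  rcases le_or_gt 0 q with hq | hq
  · have := SZ_shiftN z a q.toNat l j
    rw [Int.toNat_of_nonneg hq] at this
    rwa [abs_of_nonneg hq]
  · have := SZ_shiftN z (a+q) (-q).toNat l j
    rw [Int.toNat_of_nonneg (by omega), show a + q + -q = a by ring] at this
    rw [abs_sub_comm] at this
    rwa [abs_of_neg hq]

include hH hV h3 in
lemma caseA (p h : ℤ) (hh : 1 ≤ h) (hper : ∀ i j : ℤ, z (i - p) (j - h) = z i j) : False := by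
  have hrow : ∀ i : ℤ, dZ z i (-h) = dZ z (i + p) 0 := by
    intro i
    have := hper (i+p) 0
    rw [show i + p - p = i by ring, show (0:ℤ) - h = -h by ring] at this
    unfold dZ
    rw [this]
  have hS : ∀ (m : ℤ) (l : ℕ), SZ z m l (-h) = SZ z (m+p) l 0 := by
    intro m l
    unfold SZ
    apply Finset.sum_congr rfl
    intro k _
    rw [hrow (m + (k:ℤ)), show m + (k:ℤ) + p = m + p + (k:ℤ) by ring]
  set T := h.toNat with hTdef
  have hT : (T:ℤ) = h := Int.toNat_of_nonneg (by omega)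
  obtain ⟨a, b, hab, hQ3⟩ := Qp_form z T
  have hQpos := Qp_pos z T
  have hQne : Qp z T ≠ 1 := by
    intro h1
    rw [h1, one_mul] at hQ3
    have hnat : (3:ℕ)^b = 2^a := by exact_mod_cast hQ3
    have hb : b = 0 := by
      by_contra hb
      have h3d : (3:ℕ) ∣ 2^a := hnat ▸ dvd_pow_self 3 hb
      have := (Nat.prime_three.dvd_of_dvd_pow h3d)
      omega
    subst hb
    simp at hnat
    have ha : a = 0 := by
      by_contra ha
      have h2d : (2:ℕ) ∣ 2^a := dvd_pow_self 2 ha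
      rw [← hnat] at h2d
      omega
    omega
  set δ := |Qp z T - 1| with hδdef
  have hδpos : 0 < δ := abs_pos.mpr (sub_ne_zero.mpr hQne)
  obtain ⟨n, hn⟩ := exists_nat_gt ((Bb T + 2*|(p:ℚ)|) / δ)
  have hiter := S_iter z hH hV 0 (3*n) T
  rw [hT] at hiter
  have hSh : SZ z 0 (3*n) (-h) = SZ z (0+p) (3*n) 0 := hS 0 (3*n)
  have hshift := SZ_shiftZ z 0 p (3*n) 0
  have hlow := SZ_lower z h3 0 n 0
  -- work in ℚ
  set S : ℚ := ((SZ z 0 (3*n) 0 : ℤ) : ℚ) with hSdef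
  have hSn : (n:ℚ) ≤ S := by
    rw [hSdef]; exact_mod_cast hlow
  have hshiftQ : |((SZ z (0+p) (3*n) 0 : ℤ) : ℚ) - S| ≤ 2*|(p:ℚ)| := by
    have : ((|SZ z (0+p) (3*n) 0 - SZ z 0 (3*n) 0| : ℤ) : ℚ) ≤ ((2*|p| : ℤ) : ℚ) := by
      exact_mod_cast hshift
    rw [Int.cast_abs] at this
    push_cast at this
    convert this using 2
  have hmain : δ * S ≤ Bb T + 2*|(p:ℚ)| := by
    have e1 : δ * S = |(Qp z T - 1) * S| := by
      rw [abs_mul, hδdef]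
      have hS0 : (0:ℚ) ≤ S := by rw [hSdef]; exact_mod_cast SZ_nonneg z 0 (3*n) 0
      have : |S| = S := abs_of_nonneg hS0
      rw [this]
    have e2 : (Qp z T - 1) * S = (Qp z T * S - ((SZ z 0 (3*n) (-h) : ℤ) : ℚ))
        + (((SZ z (0+p) (3*n) 0 : ℤ) : ℚ) - S) := by
      rw [hSh]; ring
    rw [e1, e2]
    calc |(Qp z T * S - ((SZ z 0 (3*n) (-h) : ℤ) : ℚ))
          + (((SZ z (0+p) (3*n) 0 : ℤ) : ℚ) - S)|
        ≤ |Qp z T * S - ((SZ z 0 (3*n) (-h) : ℤ) : ℚ)|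
          + |((SZ z (0+p) (3*n) 0 : ℤ) : ℚ) - S| := abs_add_le _ _
      _ ≤ Bb T + 2*|(p:ℚ)| := by
          have := abs_sub_comm (((SZ z 0 (3*n) (-h) : ℤ) : ℚ)) (Qp z T * S)
          rw [this] at hiter
          exact add_le_add hiter hshiftQ
  have hfinal : δ * (n:ℚ) ≤ Bb T + 2*|(p:ℚ)| := by
    calc δ * (n:ℚ) ≤ δ * S := by apply mul_le_mul_of_nonneg_left hSn (le_of_lt hδpos)
    _ ≤ _ := hmain
  rw [div_lt_iff₀ hδpos] at hn
  nlinarith [hn, hfinal]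


include hH hV h3 in
lemma caseB (p : ℤ) (hp : 1 ≤ p) (hper : ∀ i j : ℤ, z (i - p) j = z i j) : False := by
  set P := p.toNat with hPdef
  have hPz : (P:ℤ) = p := Int.toNat_of_nonneg (by omega)
  have hP1 : 1 ≤ P := by omega
  have hdper : ∀ i j : ℤ, dZ z (i + p) j = dZ z i j := by
    intro i j
    unfold dZ
    have := hper (i+p) j
    rw [show i + p - p = i by ring] at this
    rw [this]
  have SZ_per : ∀ (a : ℤ) (l : ℕ) (j : ℤ), SZ z (a + p) l j = SZ z a l j := by
    intro a l j
    unfold SZ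
    apply Finset.sum_congr rfl
    intro k _
    rw [show a + p + (k:ℤ) = (a + (k:ℤ)) + p by ring, hdper]
  have SZ_perN : ∀ (k : ℕ) (a : ℤ) (l : ℕ) (j : ℤ), SZ z (a + (k:ℤ)*p) l j = SZ z a l j := by
    intro k
    induction k with
    | zero => intro a l j; norm_num
    | succ k ih =>
      intro a l j
      push_cast
      rw [show a + ((k:ℤ)+1)*p = (a + (k:ℤ)*p) + p by ring, SZ_per]
      have := ih a l j
      push_cast at this
      exact this
  set sZ : ℤ → ℤ := fun j => SZ z 0 P j with hsZdef
  have SZ_mul : ∀ (k : ℕ) (j : ℤ), SZ z 0 (k*P) j = k * sZ j := by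
    intro k
    induction k with
    | zero => intro j; simp [SZ]
    | succ k ih =>
      intro j
      rw [show (k+1)*P = k*P + P by ring, SZ_split]
      rw [ih j]
      have : SZ z (0 + ((k*P:ℕ):ℤ)) P j = SZ z 0 P j := by
        have := SZ_perN k 0 P j
        rw [show (0:ℤ) + (k:ℤ)*p = (k:ℤ)*p by ring] at this
        rw [show (0:ℤ) + ((k*P:ℕ):ℤ) = (k:ℤ)*p by push_cast [← hPz]; ring]
        exact this
      rw [this]
      push_cast
      ring
  have s_pos : ∀ j : ℤ, 1 ≤ sZ j := by
    intro j
    have h1 := SZ_lower z h3 0 P j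
    have h2 : SZ z 0 (3*P) j = 3 * sZ j := SZ_mul 3 j
    rw [h2] at h1
    omega
  have s_le : ∀ j : ℤ, sZ j ≤ 2*P := SZ_le z 0 P
  have exact_rel : ∀ j : ℤ, ((sZ j : ℤ) : ℚ) = qvK (Mo z (j+1)) * sZ (j+1) := by
    intro j
    set e : ℚ := ((sZ j : ℤ) : ℚ) - qvK (Mo z (j+1)) * sZ (j+1) with hedef
    have hk : ∀ k : ℕ, (k:ℚ) * |e| ≤ 2 := by
      intro k
      have hs := Srel z hH hV 0 (k*P) j
      rw [SZ_mul k j, SZ_mul k (j+1)] at hs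
      have hc1 := Cv_abs z 0 (j+1)
      have hc2 := Cv_abs z (0 + ((k*P:ℕ):ℤ)) (j+1)
      have key : (k:ℚ) * e = Cv z 0 (j+1) - Cv z (0 + ((k*P:ℕ):ℤ)) (j+1) := by
        rw [hedef]
        push_cast at hs ⊢
        linarith [hs]
      calc (k:ℚ) * |e| = |(k:ℚ) * e| := by
            rw [abs_mul, abs_of_nonneg (by positivity : (0:ℚ) ≤ (k:ℚ))]
        _ ≤ 2 := by
            rw [key]
            exact abs_le.mpr ⟨by linarith [hc1.1, hc1.2, hc2.1, hc2.2],
              by linarith [hc1.1, hc1.2, hc2.1, hc2.2]⟩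
    by_contra hne
    have habs : 0 < |e| := abs_pos.mpr (by rw [hedef]; intro hc; exact hne (by linarith))
    obtain ⟨k, hkgt⟩ := exists_nat_gt (2 / |e|)
    have := hk k
    rw [div_lt_iff₀ habs] at hkgt
    linarith
  -- descent
  set t : ℕ → ℤ := fun k => sZ (-(k:ℤ)) with htdef
  have step : ∀ k : ℕ, t (k+1) = 2 * t k ∨ 3 * t (k+1) = t k := by
    intro k
    have hr := exact_rel (-(k:ℤ)-1)
    rw [show -(k:ℤ)-1+1 = -(k:ℤ) by ring] at hr
    have hidx : t (k+1) = sZ (-(k:ℤ)-1) := by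
      rw [htdef]
      congr 1
      push_cast
      ring
    by_cases hm : Mo z (-(k:ℤ))
    · left
      rw [hm] at hr
      have : ((sZ (-(k:ℤ)-1) : ℤ) : ℚ) = 2 * sZ (-(k:ℤ)) := by
        rw [hr]; rfl
      rw [hidx]
      exact_mod_cast this
    · right
      rw [Bool.not_eq_true] at hm
      rw [hm] at hr
      have : (3:ℚ) * ((sZ (-(k:ℤ)-1) : ℤ) : ℚ) = sZ (-(k:ℤ)) := by
        rw [hr]
        show (3:ℚ) * ((1/3) * _) = _
        ring
      rw [hidx]
      exact_mod_cast this
  have form : ∀ k : ℕ, ∃ a b : ℕ, a + b = k ∧ t k * 3^b = t 0 * 2^a := by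
    intro k
    induction k with
    | zero => exact ⟨0, 0, rfl, by norm_num⟩
    | succ k ih =>
      obtain ⟨a, b, hab, hq⟩ := ih
      rcases step k with hs | hs
      · refine ⟨a+1, b, by omega, ?_⟩
        rw [hs, pow_succ]
        linear_combination 2 * hq
      · refine ⟨a, b+1, by omega, ?_⟩
        rw [pow_succ]
        linear_combination (3:ℤ)^b * hs + hq
  -- bounds and contradiction
  have t_pos : ∀ k, 1 ≤ t k := fun k => s_pos _
  have t_le : ∀ k, t k ≤ 2*(P:ℤ) := fun k => s_le _
  set k0 : ℕ := 2*P + (4*P^2 + 1) with hk0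
  obtain ⟨a, b, hab, hq⟩ := form k0
  -- natAbs equation
  have hNat : (t k0).natAbs * 3^b = (t 0).natAbs * 2^a := by
    have := congrArg Int.natAbs hq
    rwa [Int.natAbs_mul, Int.natAbs_mul, Int.natAbs_pow, Int.natAbs_pow] at this
  have hN0pos : 1 ≤ (t 0).natAbs := by have := t_pos 0; omega
  have hNkpos : 1 ≤ (t k0).natAbs := by have := t_pos k0; omega
  have hN0le : (t 0).natAbs ≤ 2*P := by have := t_le 0; have := t_pos 0; omega
  have hNkle : (t k0).natAbs ≤ 2*P := by have := t_le k0; have := t_pos k0; omega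
  have hdvd : 3^b ∣ (t 0).natAbs * 2^a := ⟨(t k0).natAbs, by rw [← hNat]; ring⟩
  have hcop : Nat.Coprime (3^b) (2^a) := Nat.Coprime.pow b a (by decide : Nat.Coprime 3 2)
  have hdvd0 : 3^b ∣ (t 0).natAbs := hcop.dvd_of_dvd_mul_right hdvd
  have h3b : 3^b ≤ (t 0).natAbs := Nat.le_of_dvd (by omega) hdvd0
  have hblt : b < 3^b := Nat.lt_pow_self (n := b) (by norm_num)
  have hb : b ≤ 2*P := by omega
  have ha : 4*P^2 + 1 ≤ a := by omega
  have h2a : 2^a ≤ 4*P^2 := by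
    calc 2^a ≤ (t 0).natAbs * 2^a := Nat.le_mul_of_pos_left _ (by omega)
    _ = (t k0).natAbs * 3^b := hNat.symm
    _ ≤ (2*P) * (2*P) := Nat.mul_le_mul hNkle (le_trans h3b hN0le)
    _ = 4*P^2 := by ring
  have hbig : 4*P^2 < 2^a := by
    calc 4*P^2 < 2^(4*P^2) := Nat.lt_two_pow_self
    _ ≤ 2^a := Nat.pow_le_pow_right (by norm_num) (by omega)
  omega


end Aperiodic


lemma patH_snd0 (p : KSym × KSym) : (patH p).2 ((0:ℤ),(0:ℤ)) = eS p.1 := by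
  show (if ((0:ℤ),(0:ℤ)) = ((0:ℤ),(0:ℤ)) then eS p.1 else eS p.2) = eS p.1
  rw [if_pos rfl]
lemma patH_snd1 (p : KSym × KSym) : (patH p).2 ((1:ℤ),(0:ℤ)) = eS p.2 := by
  show (if ((1:ℤ),(0:ℤ)) = ((0:ℤ),(0:ℤ)) then eS p.1 else eS p.2) = eS p.2
  rw [if_neg (by decide)]
lemma patV_snd0 (p : KSym × KSym) : (patV p).2 ((0:ℤ),(0:ℤ)) = eS p.2 := by
  show (if ((0:ℤ),(0:ℤ)) = ((0:ℤ),(1:ℤ)) then eS p.1 else eS p.2) = eS p.2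
  rw [if_neg (by decide)]
lemma patV_snd1 (p : KSym × KSym) : (patV p).2 ((0:ℤ),(1:ℤ)) = eS p.1 := by
  show (if ((0:ℤ),(1:ℤ)) = ((0:ℤ),(1:ℤ)) then eS p.1 else eS p.2) = eS p.1
  rw [if_pos rfl]
lemma pat3_snd0 (p : KSym × KSym × KSym) : (pat3 p).2 ((0:ℤ),(0:ℤ)) = eS p.1 := by
  show (if ((0:ℤ),(0:ℤ)) = ((0:ℤ),(0:ℤ)) then eS p.1
    else if ((0:ℤ),(0:ℤ)) = ((1:ℤ),(0:ℤ)) then eS p.2.1 else eS p.2.2) = eS p.1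
  rw [if_pos rfl]
lemma pat3_snd1 (p : KSym × KSym × KSym) : (pat3 p).2 ((1:ℤ),(0:ℤ)) = eS p.2.1 := by
  show (if ((1:ℤ),(0:ℤ)) = ((0:ℤ),(0:ℤ)) then eS p.1
    else if ((1:ℤ),(0:ℤ)) = ((1:ℤ),(0:ℤ)) then eS p.2.1 else eS p.2.2) = eS p.2.1
  rw [if_neg (by decide), if_pos rfl]
lemma pat3_snd2 (p : KSym × KSym × KSym) : (pat3 p).2 ((2:ℤ),(0:ℤ)) = eS p.2.2 := by
  show (if ((2:ℤ),(0:ℤ)) = ((0:ℤ),(0:ℤ)) then eS p.1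
    else if ((2:ℤ),(0:ℤ)) = ((1:ℤ),(0:ℤ)) then eS p.2.1 else eS p.2.2) = eS p.2.2
  rw [if_neg (by decide), if_neg (by decide)]


-- extraction of local constraints from SFT membership
lemma extractH (x : (ℤ × ℤ) → Fin 54) (hx : x ∈ SFTA LK) (i j : ℤ) :
    (eS.symm (x (i,j))).1 = (eS.symm (x (i+1,j))).1 ∧
      (eS.symm (x (i,j))).2.2.2 = (eS.symm (x (i+1,j))).2.2.1 := by
  by_contra hbad
  have hmem : patH (eS.symm (x (i,j)), eS.symm (x (i+1,j))) ∈ LK :=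
    Or.inl (Or.inl ⟨_, hbad, rfl⟩)
  obtain ⟨k, hk, hne⟩ := hx (-(i,j)) _ hmem
  rcases Finset.mem_insert.mp hk with rfl | hk
  · apply hne
    show x (-(-(i,j)) + ((0:ℤ),(0:ℤ))) = _
    rw [neg_neg, show ((i,j) : ℤ×ℤ) + ((0:ℤ),(0:ℤ)) = (i,j) by simp [Prod.ext_iff],
      patH_snd0, Equiv.apply_symm_apply]
  · rw [Finset.mem_singleton] at hk
    subst hk
    apply hne
    show x (-(-(i,j)) + ((1:ℤ),(0:ℤ))) = _
    rw [neg_neg, show ((i,j) : ℤ×ℤ) + ((1:ℤ),(0:ℤ)) = (i+1,j) by simp [Prod.ext_iff],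
      patH_snd1, Equiv.apply_symm_apply]

lemma extractV (x : (ℤ × ℤ) → Fin 54) (hx : x ∈ SFTA LK) (i j : ℤ) :
    dg (eS.symm (x (i,j))) = bv (eS.symm (x (i,j+1))) := by
  by_contra hbad
  have hmem : patV (eS.symm (x (i,j+1)), eS.symm (x (i,j))) ∈ LK :=
    Or.inl (Or.inr ⟨_, hbad, rfl⟩)
  obtain ⟨k, hk, hne⟩ := hx (-(i,j)) _ hmem
  rcases Finset.mem_insert.mp hk with rfl | hk
  · apply hne
    show x (-(-(i,j)) + ((0:ℤ),(0:ℤ))) = _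
    rw [neg_neg, show ((i,j) : ℤ×ℤ) + ((0:ℤ),(0:ℤ)) = (i,j) by simp [Prod.ext_iff],
      patV_snd0, Equiv.apply_symm_apply]
  · rw [Finset.mem_singleton] at hk
    subst hk
    apply hne
    show x (-(-(i,j)) + ((0:ℤ),(1:ℤ))) = _
    rw [neg_neg, show ((i,j) : ℤ×ℤ) + ((0:ℤ),(1:ℤ)) = (i,j+1) by simp [Prod.ext_iff],
      patV_snd1, Equiv.apply_symm_apply]

lemma extract3 (x : (ℤ × ℤ) → Fin 54) (hx : x ∈ SFTA LK) (i j : ℤ) :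
    ¬(dg (eS.symm (x (i,j))) = 0 ∧ dg (eS.symm (x (i+1,j))) = 0 ∧
      dg (eS.symm (x (i+2,j))) = 0) := by
  intro hbad
  have hmem : pat3 (eS.symm (x (i,j)), eS.symm (x (i+1,j)), eS.symm (x (i+2,j))) ∈ LK :=
    Or.inr ⟨_, hbad, rfl⟩
  obtain ⟨k, hk, hne⟩ := hx (-(i,j)) _ hmem
  rcases Finset.mem_insert.mp hk with rfl | hk
  · apply hne
    show x (-(-(i,j)) + ((0:ℤ),(0:ℤ))) = _
    rw [neg_neg, show ((i,j) : ℤ×ℤ) + ((0:ℤ),(0:ℤ)) = (i,j) by simp [Prod.ext_iff],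
      pat3_snd0, Equiv.apply_symm_apply]
  · rcases Finset.mem_insert.mp hk with rfl | hk
    · apply hne
      show x (-(-(i,j)) + ((1:ℤ),(0:ℤ))) = _
      rw [neg_neg, show ((i,j) : ℤ×ℤ) + ((1:ℤ),(0:ℤ)) = (i+1,j) by simp [Prod.ext_iff],
        pat3_snd1, Equiv.apply_symm_apply]
    · rw [Finset.mem_singleton] at hk
      subst hk
      apply hne
      show x (-(-(i,j)) + ((2:ℤ),(0:ℤ))) = _
      rw [neg_neg, show ((i,j) : ℤ×ℤ) + ((2:ℤ),(0:ℤ)) = (i+2,j) by simp [Prod.ext_iff],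
        pat3_snd2, Equiv.apply_symm_apply]

lemma stab_trivial (x : (ℤ × ℤ) → Fin 54) (hx : x ∈ SFTA LK) :
    StabA x = ({0} : Set (ℤ × ℤ)) := by
  ext v
  simp only [StabA, Set.mem_setOf_eq, Set.mem_singleton_iff]
  constructor
  · intro hv
    by_contra hv0
    set z : ℤ → ℤ → KSym := fun i j => eS.symm (x (i,j)) with hzdef
    have hH : ∀ i j : ℤ, (z i j).1 = (z (i+1) j).1 ∧ (z i j).2.2.2 = (z (i+1) j).2.2.1 :=
      fun i j => extractH x hx i j
    have hV : ∀ i j : ℤ, dg (z i j) = bv (z i (j+1)) := fun i j => extractV x hx i j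
    have h3 : ∀ i j : ℤ, ¬(dg (z i j) = 0 ∧ dg (z (i+1) j) = 0 ∧ dg (z (i+2) j) = 0) :=
      fun i j => extract3 x hx i j
    have hper : ∀ i j : ℤ, z (i - v.1) (j - v.2) = z i j := by
      intro i j
      have h1 := congrFun hv (i,j)
      show eS.symm (x (i - v.1, j - v.2)) = eS.symm (x (i,j))
      have e : ((i - v.1, j - v.2) : ℤ×ℤ) = -v + (i,j) := by
        simp [Prod.ext_iff]
        constructor <;> ring
      rw [e]
      exact congrArg eS.symm h1
    have hvneg : ShiftA (-v) x = x := by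
      funext u
      have h1 := congrFun hv (v + u)
      simp only [ShiftA] at h1
      show x (-(-v) + u) = x u
      rw [neg_neg]
      have e : -v + (v + u) = u := by abel
      rw [e] at h1
      exact h1.symm
    have hperneg : ∀ i j : ℤ, z (i + v.1) (j + v.2) = z i j := by
      intro i j
      have h1 := congrFun hvneg (i,j)
      show eS.symm (x (i + v.1, j + v.2)) = eS.symm (x (i,j))
      have e : ((i + v.1, j + v.2) : ℤ×ℤ) = -(-v) + (i,j) := by
        simp [Prod.ext_iff]
        constructor <;> ring
      rw [e]
      exact congrArg eS.symm h1
    rcases lt_trichotomy v.2 0 with h2 | h2 | h2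
    · exact caseA z hH hV h3 (-v.1) (-v.2) (by omega) (by
        intro i j
        rw [show i - -v.1 = i + v.1 by ring, show j - -v.2 = j + v.2 by ring]
        exact hperneg i j)
    · have h1 : v.1 ≠ 0 := by
        intro h1
        exact hv0 (Prod.ext h1 h2)
      rcases lt_trichotomy v.1 0 with hp | hp | hp
      · exact caseB z hH hV h3 (-v.1) (by omega) (by
          intro i j
          rw [show i - -v.1 = i + v.1 by ring]
          have := hperneg i j
          rwa [h2, add_zero] at this)
      · exact absurd hp h1.elim
      · exact caseB z hH hV h3 v.1 (by omega) (by
          intro i j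
          have := hper i j
          rwa [h2, sub_zero] at this)
    · exact caseA z hH hV h3 v.1 v.2 (by omega) hper
  · rintro rfl
    funext u
    show x (-0 + u) = x u
    rw [neg_zero, zero_add]


/-- There is a strongly aperiodic SFT on `ℤ²`: a nonempty finite alphabet `Fin m` and a
finite set `L` of patterns over `ℤ × ℤ` whose SFT `X` is nonempty with `Stab(x) = {0}`
for every `x ∈ X`. -/
theorem stmt_16 :
    ∃ (m : ℕ) (_ : 0 < m) (L : Set (Finset (ℤ × ℤ) × ((ℤ × ℤ) → Fin m))),
      L.Finite ∧ (SFTA L).Nonempty ∧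
        ∀ x ∈ SFTA L, StabA x = ({0} : Set (ℤ × ℤ)) :=
  ⟨54, by norm_num, LK, LK_finite, ⟨xKc, xKc_mem⟩, fun x hx => stab_trivial x hx⟩
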